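/- For 1 ≤ n ≤ m−1, the Chevalley–Weil signature f_n = −1 + Σ_{i=1}^N ⟨−n·a_i/m⟩ satisfies Σ_{n=1}^{m−1} f_n = 1 + ((N−2)m − Σ_{i=1}^N gcd(a_i, m))/2, i.e., the signatures sum to the genus, where ⟨q⟩ denotes the fractional part of a rational number q. -/

import Mathlib

open Finset

lemma cw_fract_eq (m a n : ℕ) :
    Int.fract ((n : ℚ) * a / m) = ((n * a % m : ℕ) : ℚ) / m := by
  rw [← Nat.cast_mul, Int.fract_div_natCast_eq_div_natCast_mod]

lemma cw_key (m a : ℕ) (hm : 2 ≤ m) :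
    ∑ n ∈ Icc 1 (m - 1), Int.fract (-((n : ℚ) * a) / m) = ((m : ℚ) - Nat.gcd a m) / 2 := by
  have hm0 : (m : ℚ) ≠ 0 := by positivity
  set d := Nat.gcd a m with hd
  have hd0 : 0 < d := Nat.gcd_pos_of_pos_right a (by omega)
  have hdm : d ∣ m := Nat.gcd_dvd_right a m
  have hda : d ∣ a := Nat.gcd_dvd_left a m
  have hdlem : d ≤ m := Nat.le_of_dvd (by omega) hdm
  set k := m / d with hk
  have hmk : m = d * k := (Nat.div_mul_cancel hdm).symm.trans (mul_comm _ _)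
  have hk0 : 0 < k := Nat.div_pos hdlem hd0
  -- S = S'
  have hS : ∑ n ∈ Icc 1 (m - 1), Int.fract (-((n : ℚ) * a) / m)
      = ∑ n ∈ Icc 1 (m - 1), Int.fract ((n : ℚ) * a / m) := by
    refine Finset.sum_nbij' (fun n => m - n) (fun n => m - n) ?_ ?_ ?_ ?_ ?_
    · intro n hn; simp only [mem_Icc] at *; omega
    · intro n hn; simp only [mem_Icc] at *; omega
    · intro n hn; simp only [mem_Icc] at hn; omega
    · intro n hn; simp only [mem_Icc] at hn; omega
    · intro n hn
      simp only [mem_Icc] at hn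
      have hcast : ((m - n : ℕ) : ℚ) = (m : ℚ) - n := by
        have : n ≤ m := by omega
        push_cast [this]; ring
      rw [hcast]
      have heq : -((n : ℚ) * a) / m = ((m : ℚ) - n) * a / m - (a : ℚ) := by
        field_simp; ring
      rw [heq]
      rw [show ((a : ℚ)) = ((a : ℤ) : ℚ) by push_cast; rfl, Int.fract_sub_intCast]
  -- pairwise sum
  have hpair : ∀ n : ℕ,
      Int.fract (-((n : ℚ) * a) / m) + Int.fract ((n : ℚ) * a / m)
        = if m ∣ n * a then 0 else 1 := by
    intro n
    have hx : -((n : ℚ) * a) / m = -((n : ℚ) * a / m) := by ring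
    by_cases h : m ∣ n * a
    · have hz : n * a % m = 0 := Nat.mod_eq_zero_of_dvd h
      have h0 : Int.fract ((n : ℚ) * a / m) = 0 := by
        rw [cw_fract_eq m a n, hz]; simp
      rw [hx, h0, Int.fract_neg_eq_zero.mpr h0]
      simp [h]
    · have h0 : Int.fract ((n : ℚ) * a / m) ≠ 0 := by
        rw [cw_fract_eq m a n]
        have hne : n * a % m ≠ 0 := fun hc => h (Nat.dvd_of_mod_eq_zero hc)
        positivity
      rw [hx, Int.fract_neg h0]
      simp [h]
  -- count of divisible n
  have hiff : ∀ n, m ∣ n * a ↔ k ∣ n := by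
    intro n
    set b := a / d with hb
    have hab : a = d * b := (Nat.div_mul_cancel hda).symm.trans (mul_comm _ _)
    have hcop : Nat.Coprime k b :=
      (Nat.coprime_div_gcd_div_gcd (m := a) (n := m) hd0).symm
    constructor
    · intro hdvd
      rw [hmk, hab] at hdvd
      have h1 : d * k ∣ d * (n * b) := by
        rw [show d * (n * b) = n * (d * b) by ring]; exact hdvd
      exact hcop.dvd_of_dvd_mul_right ((Nat.mul_dvd_mul_iff_left hd0).mp h1)
    · rintro ⟨c, hc⟩
      exact ⟨c * b, by rw [hc, hmk, hab]; ring⟩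
  have hcount : #{n ∈ Icc 1 (m - 1) | m ∣ n * a} = d - 1 := by
    rw [Finset.filter_congr (fun n _ => by simp [hiff n] : ∀ n ∈ Icc 1 (m-1), (m ∣ n * a) ↔ (k ∣ n)),
      show (Icc 1 (m-1)) = Ioc 0 (m-1) by ext x; simp [mem_Icc, mem_Ioc]; omega,
      Nat.Ioc_filter_dvd_card_eq_div]
    have hle : k ≤ m := by rw [hmk]; exact Nat.le_mul_of_pos_left k hd0
    have hexp : (d - 1) * k + k = m := by
      rw [Nat.sub_one_mul, ← hmk]; omega
    have h1 : (d - 1) * k ≤ m - 1 := by omega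
    have h2 : m - 1 < ((d - 1) + 1) * k := by rw [Nat.succ_mul]; omega
    exact Nat.div_eq_of_lt_le h1 h2
  -- combine
  have hsplit : (∑ n ∈ Icc 1 (m - 1), if m ∣ n * a then (0:ℚ) else 1)
      = (((m - 1) - (d - 1) : ℕ) : ℚ) := by
    rw [Finset.sum_ite, Finset.sum_const, Finset.sum_const]
    have hc2 := Finset.card_filter_add_card_filter_not
      (s := Icc 1 (m-1)) (p := fun n => m ∣ n * a)
    rw [Nat.card_Icc] at hc2
    simp only [smul_eq_mul, mul_zero, mul_one, zero_add, nsmul_eq_mul]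
    norm_cast
    omega
  have h2S : 2 * (∑ n ∈ Icc 1 (m - 1), Int.fract (-((n : ℚ) * a) / m))
      = (m : ℚ) - d := by
    rw [two_mul]
    nth_rewrite 2 [hS]
    rw [← Finset.sum_add_distrib, Finset.sum_congr rfl (fun n _ => hpair n), hsplit]
    have : ((m - 1) - (d - 1) : ℕ) = m - d := by omega
    rw [this]
    push_cast [hdlem]
    ring
  linarith [h2S]

/-- The Chevalley–Weil signatures `f_n = −1 + Σᵢ ⟨−n·aᵢ/m⟩` (for `1 ≤ n ≤ m−1`) sum to the
genus `g = 1 + ((N−2)m − Σᵢ gcd(aᵢ,m))/2`, where `⟨q⟩` is the fractional part of `q`. -/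
theorem sum_ChevalleyWeil_signature_eq_genus (m N : ℕ) (hm : 2 ≤ m) (hN : 2 ≤ N)
    (a : Fin N → ℕ) (ha : ∀ i, 1 ≤ a i ∧ a i ≤ m - 1)
    (hsum : m ∣ ∑ i, a i) :
    ∑ n ∈ Finset.Icc 1 (m - 1),
        (-1 + ∑ i, Int.fract (-((n : ℚ) * (a i : ℚ)) / (m : ℚ)))
      = 1 + (((N : ℚ) - 2) * (m : ℚ) - ∑ i, (Nat.gcd (a i) m : ℚ)) / 2 := by
  rw [Finset.sum_add_distrib, Finset.sum_const, Nat.card_Icc, Finset.sum_comm,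
    Finset.sum_congr rfl (fun i _ => cw_key m (a i) hm)]
  rw [← Finset.sum_div, Finset.sum_sub_distrib, Finset.sum_const,
    Finset.card_univ, Fintype.card_fin]
  have h1 : ((m - 1 + 1 - 1 : ℕ) : ℚ) = (m : ℚ) - 1 := by
    have : (1:ℕ) ≤ m := by omega
    push_cast [this]; ring
  simp only [nsmul_eq_mul, mul_neg, mul_one]
  rw [h1]
  ring
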